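/- Let δ > 0, M₂ > 0, set h = √(2δ/M₂) and ε(δ) = √(2M₂δ), and let x ∈ ℝ. Suppose f : ℝ → ℝ is twice differentiable on [x−h, x+h] with |f''(t)| ≤ M₂ there, and f_δ : ℝ → ℝ satisfies |f_δ(x+h) − f(x+h)| ≤ δ and |f_δ(x−h) − f(x−h)| ≤ δ. Define f_j = (f_δ(x+h) − f_δ(x−h))/(2h). If |f_j| > ε(δ), then f_j and f'(x) have the same sign, i.e. f_j · f'(x) > 0. -/

import Mathlib

open intervalIntegral MeasureTheory

lemma taylor_left (f f' f'' : ℝ → ℝ) (a b M : ℝ) (hab : a ≤ b)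
    (hd1 : ∀ t ∈ Set.Icc a b, HasDerivAt f (f' t) t)
    (hd2 : ∀ t ∈ Set.Icc a b, HasDerivAt f' (f'' t) t)
    (hb : ∀ t ∈ Set.Icc a b, |f'' t| ≤ M) :
    |f b - f a - (b - a) * f' a| ≤ M * (b - a) ^ 2 / 2 := by
  have ha : a ∈ Set.Icc a b := ⟨le_refl a, hab⟩
  have lip : ∀ t ∈ Set.Icc a b, |f' t - f' a| ≤ M * |t - a| := fun t ht =>
    Convex.norm_image_sub_le_of_norm_hasDerivWithin_le
      (fun s hs => (hd2 s hs).hasDerivWithinAt) hb (convex_Icc a b) ha ht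
  have cont : ContinuousOn f' (Set.Icc a b) := fun t ht =>
    (hd2 t ht).continuousAt.continuousWithinAt
  have hi : IntervalIntegrable f' volume a b :=
    (cont.mono (by rw [Set.uIcc_of_le hab])).intervalIntegrable
  have ftc : ∫ t in a..b, f' t = f b - f a :=
    integral_eq_sub_of_hasDerivAt
      (fun t ht => hd1 t (by rwa [Set.uIcc_of_le hab] at ht)) hi
  have hic : IntervalIntegrable (fun _ => f' a) volume a b := intervalIntegrable_const
  have key : f b - f a - (b - a) * f' a = ∫ t in a..b, (f' t - f' a) := by
    rw [intervalIntegral.integral_sub hi hic, ftc, intervalIntegral.integral_const]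
    ring_nf
  have hg : IntervalIntegrable (fun t => M * (t - a)) volume a b := by
    apply Continuous.intervalIntegrable; continuity
  have bnd : ∀ᵐ t ∂(volume.restrict (Set.uIoc a b)), ‖f' t - f' a‖ ≤ M * (t - a) := by
    refine MeasureTheory.ae_restrict_of_forall_mem measurableSet_uIoc ?_
    intro t ht
    rw [Set.uIoc_of_le hab] at ht
    have ht' : t ∈ Set.Icc a b := ⟨le_of_lt ht.1, ht.2⟩
    calc ‖f' t - f' a‖ ≤ M * |t - a| := lip t ht'
      _ = M * (t - a) := by rw [abs_of_nonneg (by linarith [ht.1])]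
  have h2 : ‖∫ t in a..b, (f' t - f' a)‖ ≤ |∫ t in a..b, M * (t - a)| :=
    intervalIntegral.norm_integral_le_abs_of_norm_le bnd hg
  have h3 : ∫ t in a..b, M * (t - a) = M * (b - a) ^ 2 / 2 := by
    rw [intervalIntegral.integral_const_mul]
    have : ∫ t in a..b, (t - a) = (b - a) ^ 2 / 2 := by
      have := intervalIntegral.integral_comp_sub_right (a := a) (b := b) (fun t => t) a
      rw [this, integral_id]; ring
    rw [this]; ring
  rw [key]
  calc |∫ t in a..b, (f' t - f' a)| ≤ |∫ t in a..b, M * (t - a)| := h2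
    _ = M * (b - a) ^ 2 / 2 := by
        rw [h3, abs_of_nonneg]
        have hM : 0 ≤ M := le_trans (abs_nonneg _) (hb a ha)
        positivity

lemma taylor_right (f f' f'' : ℝ → ℝ) (a b M : ℝ) (hab : a ≤ b)
    (hd1 : ∀ t ∈ Set.Icc a b, HasDerivAt f (f' t) t)
    (hd2 : ∀ t ∈ Set.Icc a b, HasDerivAt f' (f'' t) t)
    (hb : ∀ t ∈ Set.Icc a b, |f'' t| ≤ M) :
    |f b - f a - (b - a) * f' b| ≤ M * (b - a) ^ 2 / 2 := by
  have hbm : b ∈ Set.Icc a b := ⟨hab, le_refl b⟩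
  have lip : ∀ t ∈ Set.Icc a b, |f' t - f' b| ≤ M * |t - b| := fun t ht =>
    Convex.norm_image_sub_le_of_norm_hasDerivWithin_le
      (fun s hs => (hd2 s hs).hasDerivWithinAt) hb (convex_Icc a b) hbm ht
  have cont : ContinuousOn f' (Set.Icc a b) := fun t ht =>
    (hd2 t ht).continuousAt.continuousWithinAt
  have hi : IntervalIntegrable f' volume a b :=
    (cont.mono (by rw [Set.uIcc_of_le hab])).intervalIntegrable
  have ftc : ∫ t in a..b, f' t = f b - f a :=
    integral_eq_sub_of_hasDerivAt
      (fun t ht => hd1 t (by rwa [Set.uIcc_of_le hab] at ht)) hi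
  have hic : IntervalIntegrable (fun _ => f' b) volume a b := intervalIntegrable_const
  have key : f b - f a - (b - a) * f' b = ∫ t in a..b, (f' t - f' b) := by
    rw [intervalIntegral.integral_sub hi hic, ftc, intervalIntegral.integral_const]
    simp [smul_eq_mul]
  have hg : IntervalIntegrable (fun t => M * (b - t)) volume a b := by
    apply Continuous.intervalIntegrable; continuity
  have bnd : ∀ᵐ t ∂(volume.restrict (Set.uIoc a b)), ‖f' t - f' b‖ ≤ M * (b - t) := by
    refine MeasureTheory.ae_restrict_of_forall_mem measurableSet_uIoc ?_
    intro t ht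
    rw [Set.uIoc_of_le hab] at ht
    have ht' : t ∈ Set.Icc a b := ⟨le_of_lt ht.1, ht.2⟩
    calc ‖f' t - f' b‖ ≤ M * |t - b| := lip t ht'
      _ = M * (b - t) := by rw [abs_sub_comm, abs_of_nonneg (by linarith [ht.2])]
  have h2 : ‖∫ t in a..b, (f' t - f' b)‖ ≤ |∫ t in a..b, M * (b - t)| :=
    intervalIntegral.norm_integral_le_abs_of_norm_le bnd hg
  have h3 : ∫ t in a..b, M * (b - t) = M * (b - a) ^ 2 / 2 := by
    rw [intervalIntegral.integral_const_mul]
    have h4 : ∫ t in a..b, (b - t) = (b - a) ^ 2 / 2 := by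
      have e1 : ∫ t in a..b, (b - t) = ∫ t in a..b, ((fun s => (b : ℝ)) t - (fun s => s) t) := rfl
      rw [e1, intervalIntegral.integral_sub intervalIntegrable_const
        (by apply Continuous.intervalIntegrable; continuity), integral_id,
        intervalIntegral.integral_const]
      simp [smul_eq_mul]; ring
    rw [h4]; ring
  rw [key]
  calc |∫ t in a..b, (f' t - f' b)| ≤ |∫ t in a..b, M * (b - t)| := h2
    _ = M * (b - a) ^ 2 / 2 := by
        rw [h3, abs_of_nonneg]
        have hM : 0 ≤ M := le_trans (abs_nonneg _) (hb b hbm)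
        positivity

/-- sign determination.  With `h = √(2δ/M₂)`, `ε(δ) = √(2M₂δ)`,
and `f_j = (f_δ(x+h) - f_δ(x-h))/(2h)` computed from noisy data of a function
`f` twice differentiable on `[x-h, x+h]` with `|f''| ≤ M₂`: if `|f_j| > ε(δ)`
then `f_j` and `f'(x)` have the same sign. -/
theorem sign_determination
    (δ M₂ h ε x : ℝ) (hδ : 0 < δ) (hM₂ : 0 < M₂)
    (hh : h = Real.sqrt (2 * δ / M₂)) (hε : ε = Real.sqrt (2 * M₂ * δ))
    (f f' f'' fδ : ℝ → ℝ)
    (hder1 : ∀ t ∈ Set.Icc (x - h) (x + h), HasDerivAt f (f' t) t)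
    (hder2 : ∀ t ∈ Set.Icc (x - h) (x + h), HasDerivAt f' (f'' t) t)
    (hbound : ∀ t ∈ Set.Icc (x - h) (x + h), |f'' t| ≤ M₂)
    (hnoise1 : |fδ (x + h) - f (x + h)| ≤ δ)
    (hnoise2 : |fδ (x - h) - f (x - h)| ≤ δ)
    (hbig : ε < |(fδ (x + h) - fδ (x - h)) / (2 * h)|) :
    (fδ (x + h) - fδ (x - h)) / (2 * h) * f' x > 0 := by
  have hhpos : 0 < h := by
    rw [hh]; exact Real.sqrt_pos.mpr (by positivity)
  have hsq : h ^ 2 = 2 * δ / M₂ := by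
    rw [hh, Real.sq_sqrt (by positivity)]
  have hMh : M₂ * h ^ 2 = 2 * δ := by
    rw [hsq]; field_simp
  have hεh : ε * h = 2 * δ := by
    rw [hε, hh, ← Real.sqrt_mul (by positivity)]
    rw [show 2 * M₂ * δ * (2 * δ / M₂) = (2 * δ) ^ 2 by field_simp]
    exact Real.sqrt_sq (by positivity)
  have hεpos : 0 < ε := by rw [hε]; exact Real.sqrt_pos.mpr (by positivity)
  -- subsets
  have hsub1 : Set.Icc x (x + h) ⊆ Set.Icc (x - h) (x + h) :=
    Set.Icc_subset_Icc (by linarith) le_rfl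
  have hsub2 : Set.Icc (x - h) x ⊆ Set.Icc (x - h) (x + h) :=
    Set.Icc_subset_Icc le_rfl (by linarith)
  have A := taylor_left f f' f'' x (x + h) M₂ (by linarith)
    (fun t ht => hder1 t (hsub1 ht)) (fun t ht => hder2 t (hsub1 ht))
    (fun t ht => hbound t (hsub1 ht))
  have B := taylor_right f f' f'' (x - h) x M₂ (by linarith)
    (fun t ht => hder1 t (hsub2 ht)) (fun t ht => hder2 t (hsub2 ht))
    (fun t ht => hbound t (hsub2 ht))
  rw [show x + h - x = h by ring] at A
  rw [show x - (x - h) = h by ring] at B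
  set N := fδ (x + h) - fδ (x - h) with hN
  set b := f' x with hb
  have hA := abs_le.mp A
  have hB := abs_le.mp B
  have hn1 := abs_le.mp hnoise1
  have hn2 := abs_le.mp hnoise2
  have key : |N - 2 * h * b| ≤ 2 * ε * h := by
    rw [abs_le]
    constructor <;> linarith [hA.1, hA.2, hB.1, hB.2, hn1.1, hn1.2, hn2.1, hn2.2, hMh, hεh]
  have hdiff : |N / (2 * h) - b| ≤ ε := by
    have e : N / (2 * h) - b = (N - 2 * h * b) / (2 * h) := by field_simp
    rw [e, abs_div, abs_of_pos (by linarith : (0:ℝ) < 2 * h), div_le_iff₀ (by linarith)]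
    linarith [key]
  set j := N / (2 * h) with hj
  have hd := abs_le.mp hdiff
  rcases abs_cases j with ⟨h1, h2⟩ | ⟨h1, h2⟩ <;> nlinarith [hd.1, hd.2]
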